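/- arXiv:1610.01686 — 2 statements merged into one kernel-verified Lean document; each statement's English description precedes it below -/
import Mathlib

section
/- If gcd(s,t) = 1, then every hook length occurring in an (s,t)-core partition is at most st − s − t. -/
/-- A partition: a weakly decreasing list of positive integers. -/
def IsPartition (l : List ℕ) : Prop :=
  l.Pairwise (· ≥ ·) ∧ ∀ x ∈ l, 0 < x

/-- Hook length at the cell in row `i`, column `j` (0-indexed). -/
def hookLength (l : List ℕ) (i j : ℕ) : ℕ :=
  (l.getD i 0 - j - 1) + ((l.filter (fun x => j < x)).length - i - 1) + 1

/-- The Young diagram of `l` contains a hook of length `h`. -/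
def HasHook (l : List ℕ) (h : ℕ) : Prop :=
  ∃ i j, j < l.getD i 0 ∧ hookLength l i j = h

/-- `l` is an `s`-core: no hook of length `s`. -/
def IsCore (s : ℕ) (l : List ℕ) : Prop := ¬ HasHook l s

/-- The conjugate (transpose) partition. -/
def conjugate (l : List ℕ) : List ℕ :=
  (List.range (l.headD 0)).map (fun j => (l.filter (fun x => j < x)).length)

def SelfConjugate (l : List ℕ) : Prop := conjugate l = l

/-- The staircase partition `(k, k-1, …, 1)`. -/
def staircase (k : ℕ) : List ℕ := (List.range k).map (fun i => k - i)

/-- The minimal bead set: the set of first-column hook lengths. -/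
def beadSet (l : List ℕ) : Finset ℕ :=
  (Finset.range l.length).image (fun i => l.getD i 0 + (l.length - 1 - i))

lemma filter_length_iff (j : ℕ) : ∀ (l : List ℕ), l.Pairwise (· ≥ ·) →
    ∀ k < l.length, (k < (l.filter (fun x => j < x)).length ↔ j < l.getD k 0) := by
  intro l
  induction l with
  | nil => intro _ k hk; simp at hk
  | cons a l ih =>
    intro hs k hk
    have hs' : l.Pairwise (· ≥ ·) := hs.of_cons
    have hle : ∀ x ∈ l, x ≤ a := fun x hx => List.rel_of_pairwise_cons hs hx
    by_cases hja : j < a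
    · rw [List.filter_cons_of_pos (by simpa using hja)]
      cases k with
      | zero => simpa using hja
      | succ k =>
        simp only [List.length_cons] at hk ⊢
        have := ih hs' k (by omega)
        simp only [List.getD_cons_succ]
        constructor
        · intro h; exact this.mp (by omega)
        · intro h; have := this.mpr h; omega
    · have hnil : (a :: l).filter (fun x => j < x) = [] := by
        rw [List.filter_eq_nil_iff]
        intro x hx
        simp only [decide_eq_true_eq, not_lt]
        rcases List.mem_cons.mp hx with rfl | hx
        · omega
        · exact le_trans (hle x hx) (by omega)
      rw [hnil]
      simp only [List.length_nil, Nat.not_lt_zero, false_iff, not_lt]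
      cases k with
      | zero => simpa using (by omega : a ≤ j)
      | succ k =>
        simp only [List.getD_cons_succ]
        have hkl : k < l.length := by simpa using hk
        have hg : l.getD k 0 = l[k] := List.getD_eq_getElem l 0 hkl
        have hmem : l[k] ∈ l := List.getElem_mem hkl
        have := hle _ hmem
        omega

lemma mem_beadSet {l : List ℕ} {x : ℕ} :
    x ∈ beadSet l ↔ ∃ i, i < l.length ∧ l.getD i 0 + (l.length - 1 - i) = x := by
  simp [beadSet, Finset.mem_image, Finset.mem_range]

lemma getD_anti {l : List ℕ} (hs : l.Pairwise (· ≥ ·)) {i k : ℕ} (hik : i ≤ k)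
    (hk : k < l.length) : l.getD k 0 ≤ l.getD i 0 := by
  rcases eq_or_lt_of_le hik with rfl | hik'
  · exact le_refl _
  · have hi : i < l.length := lt_trans hik' hk
    rw [List.getD_eq_getElem l 0 hk, List.getD_eq_getElem l 0 hi]
    exact List.pairwise_iff_getElem.mp hs i k hi hk hik'

/-- Direction 1: a hook of length `h` at `(i,j)` produces a "gap" `g ∉ beadSet`
with `g + h` equal to the bead of row `i`. -/
lemma hook_gap {l : List ℕ} (hl : IsPartition l) {i j : ℕ} (hj : j < l.getD i 0) :
    i < l.length ∧
    (j + (l.length - (l.filter (fun x => j < x)).length)) ∉ beadSet l ∧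
    (j + (l.length - (l.filter (fun x => j < x)).length)) + hookLength l i j
      = l.getD i 0 + (l.length - 1 - i) := by
  set n := l.length with hn
  set lam := (l.filter (fun x => j < x)).length with hlam
  have hi : i < n := by
    by_contra hcon
    rw [List.getD_eq_default l 0 (by omega)] at hj; omega
  have hlamn : lam ≤ n := List.length_filter_le _ _
  have hilam : i < lam := (filter_length_iff j l hl.1 i hi).mpr hj
  refine ⟨hi, ?_, ?_⟩
  · intro hmem
    obtain ⟨k, hk, hbk⟩ := mem_beadSet.mp hmem
    by_cases hklam : k < lam
    · have := (filter_length_iff j l hl.1 k hk).mp hklam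
      omega
    · have := mt (filter_length_iff j l hl.1 k hk).mpr (by omega)
      omega
  · have hdef : hookLength l i j = (l.getD i 0 - j - 1) + (lam - i - 1) + 1 := rfl
    omega

/-- Direction 2: a gap below a bead produces a hook. -/
lemma hasHook_of_gap {l : List ℕ} (hl : IsPartition l) {i h c : ℕ}
    (hi : i < l.length) (hh : 0 < h)
    (hsum : c + h = l.getD i 0 + (l.length - 1 - i)) (hc : c ∉ beadSet l) :
    HasHook l h := by
  set n := l.length with hn
  have hex : ∃ k, k = n ∨ (k < n ∧ l.getD k 0 + (n - 1 - k) < c) := ⟨n, Or.inl rfl⟩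
  have key : ∃ m, m ≤ n ∧ (∀ k, k < m → k < n ∧ c ≤ l.getD k 0 + (n - 1 - k)) ∧
      (m = n ∨ (m < n ∧ l.getD m 0 + (n - 1 - m) < c)) := by
    have hfn : Nat.find hex ≤ n := by
      by_contra hcon
      exact Nat.find_min hex (by omega) (Or.inl rfl)
    refine ⟨Nat.find hex, hfn, ?_, Nat.find_spec hex⟩
    intro k hk
    have := Nat.find_min hex hk
    push_neg at this
    exact ⟨by omega, by have := this.2 (by omega); omega⟩
  obtain ⟨m, hmn, hlow, hmspec⟩ := key
  have hhigh : ∀ k, m ≤ k → k < n → l.getD k 0 + (n - 1 - k) < c := by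
    intro k hmk hkn
    rcases hmspec with h' | h'
    · omega
    · have hbm := h'.2
      have := getD_anti hl.1 hmk hkn
      omega
  -- the beads below c are the (n - m) beads of rows m..n-1, all distinct, so n - m ≤ c
  have hnm : n - m ≤ c := by
    have hcard : (Finset.Ico m n).card ≤ (Finset.range c).card := by
      apply Finset.card_le_card_of_injOn (fun k => l.getD k 0 + (n - 1 - k))
      · intro k hk
        simp only [Finset.mem_coe, Finset.mem_Ico] at hk
        simp only [Finset.mem_coe, Finset.mem_range]
        exact hhigh k hk.1 hk.2
      · intro k1 hk1 k2 hk2 heq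
        simp only [Finset.mem_coe, Finset.mem_Ico] at hk1 hk2
        simp only [] at heq
        by_contra hne
        rcases Nat.lt_or_ge k1 k2 with hlt | hge
        · have := getD_anti hl.1 (le_of_lt hlt) hk2.2; omega
        · have hlt : k2 < k1 := by omega
          have := getD_anti hl.1 (le_of_lt hlt) hk1.2; omega
    simpa using hcard
  set j := c - (n - m) with hj
  -- rows below m have entry > j ; rows ≥ m have entry ≤ j
  have hgt : ∀ k, k < m → j < l.getD k 0 := by
    intro k hk
    have hm1 := hlow (m - 1) (by omega)
    have hcne : c ≠ l.getD (m-1) 0 + (n - 1 - (m-1)) := by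
      intro heq
      exact hc (mem_beadSet.mpr ⟨m - 1, hm1.1, heq.symm⟩)
    have h1 : j < l.getD (m - 1) 0 := by
      have := hm1.2
      omega
    have := getD_anti hl.1 (by omega : k ≤ m - 1) hm1.1
    omega
  have hlej : ∀ k, m ≤ k → k < n → l.getD k 0 ≤ j := by
    intro k hmk hkn
    have hbm := hhigh m (le_refl m) (by omega)
    have := getD_anti hl.1 hmk hkn
    omega
  have hlameq : (l.filter (fun x => j < x)).length = m := by
    set lam := (l.filter (fun x => j < x)).length with hlam
    have hlamn : lam ≤ n := List.length_filter_le _ _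
    by_contra hne
    rcases Nat.lt_or_ge lam m with hlt | hge
    · have h1 := hgt lam hlt
      have h2 := (filter_length_iff j l hl.1 lam (by omega)).mpr h1
      omega
    · have hmlt : m < lam := by omega
      have h1 := (filter_length_iff j l hl.1 m (by omega)).mp hmlt
      have h2 := hlej m (le_refl m) (by omega)
      omega
  have him : i < m := by
    by_contra hcon
    have := hhigh i (by omega) hi
    omega
  refine ⟨i, j, hgt i him, ?_⟩
  have hdef : hookLength l i j = (l.getD i 0 - j - 1) + (m - i - 1) + 1 := by
    rw [hookLength, hlameq]
  have hji := hgt i him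
  omega

/-- The bead set of an `s`-core is closed under subtracting `s`. -/
lemma bead_closed {l : List ℕ} (hl : IsPartition l) {s : ℕ} (hs : 0 < s)
    (hcore : IsCore s l) : ∀ b ∈ beadSet l, s ≤ b → b - s ∈ beadSet l := by
  intro b hb hsb
  by_contra hcon
  obtain ⟨i, hi, hbi⟩ := mem_beadSet.mp hb
  exact hcore (hasHook_of_gap hl hi hs (by omega) hcon)

lemma bead_closed_rep {l : List ℕ} (hl : IsPartition l) {s t : ℕ} (hs : 0 < s)
    (ht : 0 < t) (h1 : IsCore s l) (h2 : IsCore t l) :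
    ∀ N x y b, x + y = N → b ∈ beadSet l → x * s + y * t ≤ b →
      b - (x * s + y * t) ∈ beadSet l := by
  intro N
  induction N with
  | zero =>
    intro x y b hxy hb hle
    have hx : x = 0 := by omega
    have hy : y = 0 := by omega
    subst hx; subst hy
    simpa using hb
  | succ N ih =>
    intro x y b hxy hb hle
    rcases Nat.eq_zero_or_pos x with hx | hx
    · subst hx
      obtain ⟨y', rfl⟩ : ∃ y', y = y' + 1 := ⟨y - 1, by omega⟩
      have hexp : (y' + 1) * t = y' * t + t := by ring
      rw [hexp] at hle ⊢
      have hb' := bead_closed hl ht h2 b hb (by omega)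
      have := ih 0 y' (b - t) (by omega) hb' (by omega)
      have heq : b - t - (0 * s + y' * t) = b - (0 * s + (y' * t + t)) := by omega
      rwa [heq] at this
    · obtain ⟨x', rfl⟩ : ∃ x', x = x' + 1 := ⟨x - 1, by omega⟩
      have hexp : (x' + 1) * s = x' * s + s := by ring
      rw [hexp] at hle ⊢
      have hb' := bead_closed hl hs h1 b hb (by omega)
      have := ih x' y (b - s) (by omega) hb' (by omega)
      have heq : b - s - (x' * s + y * t) = b - (x' * s + s + y * t) := by omega
      rwa [heq] at this

lemma rep_of_large {s t h : ℕ} (hs : 0 < s) (ht : 0 < t) (hst : Nat.gcd s t = 1)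
    (hbig : s * t - s - t < h) : ∃ x y, x * s + y * t = h := by
  rcases Nat.eq_or_lt_of_le hs with hs1 | hs2
  · subst hs1; exact ⟨h, 0, by omega⟩
  rcases Nat.eq_or_lt_of_le ht with ht1 | ht2
  · subst ht1; exact ⟨0, h, by omega⟩
  have hfrob := frobeniusNumber_pair (m := s) (n := t) hst (by omega) (by omega)
  have hmem : h ∈ AddSubmonoid.closure ({s, t} : Set ℕ) := by
    by_contra hcon
    exact absurd (hfrob.2 hcon) (by omega)
  rw [AddSubmonoid.mem_closure_pair] at hmem
  obtain ⟨a, b, hab⟩ := hmem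
  exact ⟨a, b, by simpa [smul_eq_mul] using hab⟩

theorem hook_bound_of_coprime_core (s t : ℕ) (hs : 0 < s) (ht : 0 < t)
    (hst : Nat.gcd s t = 1) (l : List ℕ) (hl : IsPartition l)
    (h1 : IsCore s l) (h2 : IsCore t l) :
    ∀ i j, j < l.getD i 0 → hookLength l i j ≤ s * t - s - t := by
  intro i j hj
  by_contra hcon
  push_neg at hcon
  obtain ⟨x, y, hxy⟩ := rep_of_large hs ht hst hcon
  obtain ⟨hi, hgap, hsum⟩ := hook_gap hl hj
  set g := j + (l.length - (l.filter (fun x => j < x)).length) with hg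
  have hb : l.getD i 0 + (l.length - 1 - i) ∈ beadSet l :=
    mem_beadSet.mpr ⟨i, hi, rfl⟩
  have := bead_closed_rep hl hs ht h1 h2 (x + y) x y _ rfl hb (by omega)
  have hgeq : l.getD i 0 + (l.length - 1 - i) - (x * s + y * t) = g := by omega
  rw [hgeq] at this
  exact hgap this
end

section
/- For α ≥ 1, the number of self-conjugate (2α, 2α+1)-core partitions with distinct parts equals α+1, and the number of self-conjugate (2α+1, 2α+2)-core partitions with distinct parts also equals α+1. -/
lemma staircase_succ (k : ℕ) : staircase (k+1) = (k+1) :: staircase k := by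
  simp [staircase, List.range_succ_eq_map, List.map_map, Function.comp]

lemma staircase_length (k : ℕ) : (staircase k).length = k := by simp [staircase]

lemma staircase_getElem (k i : ℕ) (h : i < (staircase k).length) :
    (staircase k)[i] = k - i := by
  simp [staircase]

lemma staircase_getD (k i : ℕ) (h : i < k) : (staircase k).getD i 0 = k - i := by
  rw [List.getD_eq_getElem _ _ (by rwa [staircase_length]), staircase_getElem]

lemma staircase_filter_len (k j : ℕ) :
    ((staircase k).filter (fun x => j < x)).length = k - j := by
  induction k with
  | zero => simp [staircase]
  | succ k ih =>
    rw [staircase_succ, List.filter_cons]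
    by_cases h : j < k + 1 <;> simp [h, ih] <;> omega

lemma staircase_headD (k : ℕ) : (staircase k).headD 0 = k := by
  cases k with
  | zero => rfl
  | succ k => rw [staircase_succ]; rfl

lemma conjugate_staircase (k : ℕ) : conjugate (staircase k) = staircase k := by
  unfold conjugate
  rw [staircase_headD]
  exact List.map_congr_left (fun j _ => staircase_filter_len k j)

lemma staircase_sorted (k : ℕ) : (staircase k).Pairwise (· > ·) := by
  induction k with
  | zero => simp [staircase]
  | succ k ih =>
    rw [staircase_succ]
    refine List.pairwise_cons.mpr ⟨?_, ih⟩
    intro b hb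
    simp only [staircase, List.mem_map, List.mem_range] at hb
    obtain ⟨i, hi, rfl⟩ := hb
    omega

lemma staircase_partition (k : ℕ) : IsPartition (staircase k) := by
  constructor
  · exact (staircase_sorted k).imp (fun h => le_of_lt h)
  · intro x hx
    simp only [staircase, List.mem_map, List.mem_range] at hx
    obtain ⟨i, hi, rfl⟩ := hx
    omega

lemma staircase_nodup (k : ℕ) : (staircase k).Nodup :=
  (staircase_sorted k).imp (fun h => ne_of_gt h)

lemma staircase_hasHook {k s : ℕ} (h : HasHook (staircase k) s) :
    ∃ a, a < k ∧ s = 2 * a + 1 := by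
  obtain ⟨i, j, hj, hs⟩ := h
  have hik : i < k := by
    by_contra hik
    rw [List.getD_eq_default _ _ (by rw [staircase_length]; omega)] at hj
    omega
  rw [staircase_getD k i hik] at hj
  unfold hookLength at hs
  rw [staircase_getD k i hik, staircase_filter_len] at hs
  exact ⟨k - i - j - 1, by omega, by omega⟩

lemma staircase_core_even (k β : ℕ) : IsCore (2 * β) (staircase k) := by
  intro h
  obtain ⟨a, _, ha⟩ := staircase_hasHook h
  omega

lemma staircase_core_odd {k β : ℕ} (hk : k ≤ β) : IsCore (2 * β + 1) (staircase k) := by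
  intro h
  obtain ⟨a, h1, h2⟩ := staircase_hasHook h
  omega

lemma staircase_length_le {k β : ℕ} (h : IsCore (2 * β + 1) (staircase k)) : k ≤ β := by
  by_contra hk
  push_neg at hk
  apply h
  refine ⟨0, k - β - 1, ?_, ?_⟩
  · rw [staircase_getD k 0 (by omega)]; omega
  · unfold hookLength
    rw [staircase_getD k 0 (by omega), staircase_filter_len]
    omega

lemma strict_getD_le {l : List ℕ} (hs : l.Pairwise (· > ·)) :
    ∀ d i, i + d < l.length → l.getD (i + d) 0 + d ≤ l.getD i 0 := by
  intro d
  induction d with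
  | zero => intro i h; simp
  | succ d ih =>
    intro i h
    have h1 := ih (i + 1) (by omega)
    have h2 : l.getD (i + 1) 0 < l.getD i 0 := by
      have := List.pairwise_iff_get.mp hs ⟨i, by omega⟩ ⟨i + 1, by omega⟩ (by simp)
      rw [List.getD_eq_getElem _ _ (by omega : i + 1 < l.length),
        List.getD_eq_getElem _ _ (by omega : i < l.length)]
      simpa [List.get_eq_getElem] using this
    have : i + (d + 1) = (i + 1) + d := by omega
    rw [this]
    omega

lemma selfConj_distinct_eq_staircase {l : List ℕ} (hP : IsPartition l)
    (hSC : SelfConjugate l) (hND : l.Nodup) : l = staircase l.length := by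
  have hs : l.Pairwise (· > ·) := by
    have := List.Pairwise.and hP.1 hND
    exact this.imp (fun h => lt_of_le_of_ne h.1 h.2.symm)
  have hlen : l.length = l.headD 0 := by
    have := congrArg List.length hSC
    simpa [conjugate] using this.symm
  rcases l with _ | ⟨a, t⟩
  · rfl
  set l := a :: t
  set k := l.length with hk
  have hne : 0 < k := by simp [hk, l]
  have h0 : l.getD 0 0 = k := by
    rw [hlen]; rfl
  have hget : ∀ i, i < k → l.getD i 0 = k - i := by
    intro i hi
    have hup : l.getD i 0 + i ≤ k := by
      have := strict_getD_le hs i 0 (by omega)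
      simp only [Nat.zero_add] at this
      omega
    have hmem : l.getD (k - 1) 0 ∈ l := by
      rw [List.getD_eq_getElem _ _ (by omega)]
      exact List.getElem_mem _
    have hpos : 0 < l.getD (k - 1) 0 := hP.2 _ hmem
    have hlow := strict_getD_le hs (k - 1 - i) i (by omega)
    have : i + (k - 1 - i) = k - 1 := by omega
    rw [this] at hlow
    omega
  apply List.ext_getElem (by rw [staircase_length])
  intro i h1 h2
  rw [staircase_getElem]
  rw [← List.getD_eq_getElem _ 0 h1]
  exact hget i h1

lemma set_eq (β : ℕ) (s t : ℕ) (hs : ∀ k ≤ β, IsCore s (staircase k))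
    (ht : ∀ k ≤ β, IsCore t (staircase k)) (hts : t = 2 * β + 1 ∨ s = 2 * β + 1) :
    {l : List ℕ | IsPartition l ∧ SelfConjugate l ∧ l.Nodup ∧
      IsCore s l ∧ IsCore t l} = staircase '' Set.Iic β := by
  ext l
  constructor
  · rintro ⟨hP, hSC, hND, hc1, hc2⟩
    have hl := selfConj_distinct_eq_staircase hP hSC hND
    refine ⟨l.length, ?_, hl.symm⟩
    rcases hts with h | h
    · exact staircase_length_le (h ▸ hl ▸ hc2)
    · exact staircase_length_le (h ▸ hl ▸ hc1)
  · rintro ⟨k, hk, rfl⟩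
    exact ⟨staircase_partition k, conjugate_staircase k, staircase_nodup k,
      hs k hk, ht k hk⟩

lemma staircase_injective : Function.Injective staircase := by
  intro a b h
  have := congrArg List.length h
  simpa [staircase_length] using this

theorem selfConjugate_distinct_consecutive_cores (α : ℕ) (hα : 1 ≤ α) :
    {l : List ℕ | IsPartition l ∧ SelfConjugate l ∧ l.Nodup ∧
      IsCore (2 * α) l ∧ IsCore (2 * α + 1) l}.ncard = α + 1 ∧
    {l : List ℕ | IsPartition l ∧ SelfConjugate l ∧ l.Nodup ∧
      IsCore (2 * α + 1) l ∧ IsCore (2 * α + 2) l}.ncard = α + 1 := by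
  have hn : (staircase '' Set.Iic α).ncard = α + 1 := by
    rw [Set.ncard_image_of_injective _ staircase_injective, ← Finset.coe_Iic,
      Set.ncard_coe_finset, Nat.card_Iic]
  constructor
  · rw [set_eq α (2 * α) (2 * α + 1) (fun k _ => staircase_core_even k α)
      (fun k hk => staircase_core_odd hk) (Or.inl rfl)]
    exact hn
  · have h2 : 2 * α + 2 = 2 * (α + 1) := by ring
    rw [set_eq α (2 * α + 1) (2 * α + 2) (fun k hk => staircase_core_odd hk)
      (fun k _ => h2 ▸ staircase_core_even k (α + 1)) (Or.inr rfl)]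
    exact hn
end
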